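/- Let $A$ be a commutative $\mathbb{Q}$-algebra, $D : A \to A$ a derivation, and $E, \Lambda \in A$ with $D E = \Lambda + E^2$. Define $\partial E := \Lambda - E^2$ (equivalently $\partial E = DE - 2E^2$), set $\partial_{(0)} E := E$, $\partial_{(1)} E := \Lambda - E^2$, and $\partial_{(j+1)} E := \partial(\partial_{(j)} E) + j(j+1)\Lambda\,\partial_{(j-1)} E$, where $\partial(\partial_{(j)} E) := D(\partial_{(j)} E) - (2+2j) E\,\partial_{(j)} E$. Then for all $n \ge 0$: $\partial_{(n)} E = \Psi_n + (-1)^n n!\, E^{n+1}$, where $\Psi_0 := 0$, $\Psi_1 := \Lambda$, and $\Psi_{j+1} := \partial \Psi_j + j(j+1)\Lambda \Psi_{j-1}$ with $\partial \Psi_j := D\Psi_j - (2j+2)E\Psi_j$ (note: since $\Psi_j$ depends only on $\Lambda$ and its Serre-type derivatives, $\partial \Psi_j$ is the weight-$(2j+2)$ twisted derivative). -/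
import Mathlib

open Finset

theorem stmt_3 {A : Type*} [CommRing A] [Algebra ℚ A]
    (D : Derivation ℚ A A) (E Λ : A)
    (hDE : D E = Λ + E ^ 2)
    (SE : ℕ → A) (Ψ : ℕ → A)
    (hSE0 : SE 0 = E)
    (hSE1 : SE 1 = Λ - E ^ 2)
    (hSErec : ∀ j : ℕ, SE (j + 2) =
      (D (SE (j + 1)) - (2 + 2 * (j + 1 : ℕ) : ℚ) • (E * SE (j + 1)))
        + (((j + 1 : ℕ) * ((j + 1 : ℕ) + 1) : ℚ) • (Λ * SE j)))
    (hΨ0 : Ψ 0 = 0)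
    (hΨ1 : Ψ 1 = Λ)
    (hΨrec : ∀ j : ℕ, Ψ (j + 2) =
      (D (Ψ (j + 1)) - (2 * (j + 1 : ℕ) + 2 : ℚ) • (E * Ψ (j + 1)))
        + (((j + 1 : ℕ) * ((j + 1 : ℕ) + 1) : ℚ) • (Λ * Ψ j)))
    (n : ℕ) :
    SE n = Ψ n + ((-1 : ℚ) ^ n * (Nat.factorial n : ℚ)) • E ^ (n + 1) := by
  induction n using Nat.twoStepInduction with
  | zero => simp [hSE0, hΨ0]
  | one => rw [hSE1, hΨ1]; simp; ring
  | more j ih2 ih1 =>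
    have h2 : (algebraMap ℚ A) (2:ℚ) = 2 := by
      rw [show (2:ℚ) = ((2:ℕ):ℚ) by norm_num, map_natCast]; norm_num
    rw [hSErec j, hΨrec j, ih1, ih2, D.map_add, D.map_smul, Derivation.leibniz_pow, hDE]
    simp only [Algebra.smul_def, map_add, map_sub, map_mul, map_pow, map_neg, map_one,
      map_natCast, h2, Algebra.algebraMap_self_apply, eq_natCast, nsmul_eq_mul, smul_eq_mul, Nat.cast_add, Nat.cast_mul, Nat.cast_one]
    push_cast [Nat.factorial_succ]
    ring
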